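/- Let k ≥ 2 be an integer. If f, g : (1,∞) → (0,∞) satisfy (g(x₁⋯x_k))/(f(x₁⋯x_k)) = (g(x₁)+⋯+g(x_k))/(f(x₁)+⋯+f(x_k)) for all x₁,…,x_k ∈ (1,∞), and the limit c := lim_{x→1⁺} g(x)/f(x) exists, then g(x) = c·f(x) for all x ∈ (1,∞). -/

import Mathlib

open Set Filter

theorem stmt_1 (k : ℕ) (hk : 2 ≤ k) (f g : ℝ → ℝ)
    (hf : ∀ x ∈ Set.Ioi (1:ℝ), 0 < f x) (hg : ∀ x ∈ Set.Ioi (1:ℝ), 0 < g x)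
    (heq : ∀ x : Fin k → ℝ, (∀ i, x i ∈ Set.Ioi (1:ℝ)) →
        g (∏ i, x i) / f (∏ i, x i) = (∑ i, g (x i)) / (∑ i, f (x i)))
    (c : ℝ) (hlim : Tendsto (fun x => g x / f x) (nhdsWithin 1 (Set.Ioi 1)) (nhds c)) :
    ∀ x ∈ Set.Ioi (1:ℝ), g x = c * f x := by
  intro x hx
  have hx1 : (1:ℝ) < x := hx
  have hx0 : (0:ℝ) < x := lt_trans one_pos hx1
  have hkR : (0:ℝ) < (k:ℝ) := by positivity
  -- key: for a > 1, h(a^k) = h(a)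
  have key : ∀ a : ℝ, 1 < a → g (a ^ k) / f (a ^ k) = g a / f a := by
    intro a ha
    have h := heq (fun _ => a) (fun _ => ha)
    simp only [Finset.prod_const, Finset.sum_const, Finset.card_univ, Fintype.card_fin,
      nsmul_eq_mul] at h
    rw [h, mul_div_mul_left _ _ (ne_of_gt hkR)]
  -- sequence a n = x ^ ((k:ℝ)⁻¹ ^ n)
  set a : ℕ → ℝ := fun n => x ^ ((k:ℝ)⁻¹ ^ n) with ha
  have hexp : ∀ n, (0:ℝ) < (k:ℝ)⁻¹ ^ n := fun n => by positivity
  have ha1 : ∀ n, 1 < a n := fun n =>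
    Real.one_lt_rpow_iff_of_pos hx0 |>.2 (Or.inl ⟨hx1, hexp n⟩)
  have hrec : ∀ n, (a (n+1)) ^ k = a n := by
    intro n
    rw [ha]
    rw [← Real.rpow_natCast (x ^ ((k:ℝ)⁻¹ ^ (n+1))) k, ← Real.rpow_mul (le_of_lt hx0)]
    congr 1
    rw [pow_succ]
    field_simp
  have hconst : ∀ n, g (a n) / f (a n) = g x / f x := by
    intro n
    induction n with
    | zero => simp [ha, Real.rpow_natCast]
    | succ n ih =>
      rw [← ih, ← hrec n, key _ (ha1 (n+1))]
  -- a n → 1 within Ioi 1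
  have htend : Tendsto a atTop (nhdsWithin 1 (Set.Ioi 1)) := by
    apply tendsto_nhdsWithin_of_tendsto_nhds_of_eventually_within
    · have h1 : Tendsto (fun n => (k:ℝ)⁻¹ ^ n) atTop (nhds 0) := by
        apply tendsto_pow_atTop_nhds_zero_of_lt_one (by positivity)
        rw [inv_lt_one_iff₀]
        right
        exact_mod_cast lt_of_lt_of_le one_lt_two hk
      have := (Real.continuousAt_const_rpow (ne_of_gt hx0) : ContinuousAt (x ^ · : ℝ → ℝ) 0).tendsto.comp h1
      simpa [ha, Function.comp_def, Real.rpow_zero, inv_pow] using this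
    · exact Eventually.of_forall (fun n => ha1 n)
  have : Tendsto (fun n => g (a n) / f (a n)) atTop (nhds c) := hlim.comp htend
  have hx' : Tendsto (fun _ : ℕ => g x / f x) atTop (nhds c) := by
    simpa only [hconst] using this
  have hc : g x / f x = c := tendsto_nhds_unique tendsto_const_nhds hx'
  have hfx := hf x hx
  field_simp at hc
  linarith [hc]
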